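/- (Varopoulos isoperimetric inequality) Let G be a group generated by a finite set S and let X be the Cayley graph of G with respect to S. Let A be a nonempty finite subset of the vertices of X, and let m be the minimum positive integer such that b(m) ≥ 2|A|. Then |A| ≤ 2m |∂A|. -/

import Mathlib

/-- The (outer vertex) boundary of a set `A` in a simple graph. -/
def SimpleGraph.boundarySet {V : Type*} (G : SimpleGraph V) (A : Set V) : Set V :=
  {u | u ∉ A ∧ ∃ v ∈ A, G.Adj u v}

/-- The graph distance from a vertex to a set of vertices. -/
noncomputable def SimpleGraph.distToSet {V : Type*} (G : SimpleGraph V) (u : V) (A : Set V) : ℕ :=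
  sInf ((fun v => G.dist u v) '' A)

/-- The depth of a set: the supremum over `u ∈ A` of the distance from `u` to the complement. -/
noncomputable def SimpleGraph.depthSet {V : Type*} (G : SimpleGraph V) (A : Set V) : ℕ :=
  sSup ((fun u => G.distToSet u Aᶜ) '' A)

/-- The Cayley graph of the lattice ℤ² with its standard generating set:
`u` and `v` are adjacent iff they differ by `1` in exactly one coordinate. -/
def zsqGraph : SimpleGraph (ℤ × ℤ) where
  Adj u v := |u.1 - v.1| + |u.2 - v.2| = 1
  symm := by
    constructor
    intro u v h
    beta_reduce at h ⊢
    rw [abs_sub_comm v.1, abs_sub_comm v.2]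
    exact h
  loopless := by constructor; intro u h; simp at h

/-- The Cayley graph of a group `G` with respect to a generating set `S`. -/
def cayleyGraph {G : Type*} [Group G] (S : Set G) : SimpleGraph G where
  Adj x y := x ≠ y ∧ x⁻¹ * y ∈ S ∪ S⁻¹
  symm := by
    constructor
    rintro x y ⟨hxy, hmem⟩
    refine ⟨hxy.symm, ?_⟩
    have h : y⁻¹ * x = (x⁻¹ * y)⁻¹ := by group
    rw [h]
    rcases hmem with h' | h'
    · exact Or.inr (Set.inv_mem_inv.mpr h')
    · exact Or.inl (by simpa using h')
  loopless := ⟨fun x h => h.1 rfl⟩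

/-- `ballCard S n` is the number of vertices in the ball of radius `n`
(centered at the identity) in the Cayley graph of `G` with respect to `S`. -/
noncomputable def ballCard {G : Type*} [Group G] (S : Set G) (n : ℕ) : ℕ :=
  {x : G | (cayleyGraph S).dist 1 x ≤ n}.ncard

section aux

variable {G : Type*} [Group G] {S : Set G}

/-- Left multiplication as a graph homomorphism of the Cayley graph. -/
def leftMulHom (S : Set G) (a : G) : cayleyGraph S →g cayleyGraph S where
  toFun x := a * x
  map_rel' := by
    rintro x y ⟨hne, hmem⟩
    refine ⟨fun h => hne (mul_left_cancel h), ?_⟩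
    have h : (a * x)⁻¹ * (a * y) = x⁻¹ * y := by group
    rw [h]; exact hmem

@[simp] lemma leftMulHom_apply (a x : G) : leftMulHom S a x = a * x := rfl

lemma reachable_one_cayley (hgen : Subgroup.closure S = ⊤) (x : G) :
    (cayleyGraph S).Reachable 1 x := by
  let H : Subgroup G :=
    { carrier := {x | (cayleyGraph S).Reachable 1 x}
      one_mem' := SimpleGraph.Reachable.refl 1
      mul_mem' := by
        intro a b ha hb
        have := hb.map (leftMulHom S a)
        rw [leftMulHom_apply, leftMulHom_apply, mul_one] at this
        exact ha.trans this
      inv_mem' := by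
        intro a ha
        have := ha.map (leftMulHom S a⁻¹)
        rw [leftMulHom_apply, leftMulHom_apply, mul_one, inv_mul_cancel] at this
        exact this.symm }
  have hle : Subgroup.closure S ≤ H := by
    rw [Subgroup.closure_le]
    intro s hs
    by_cases h1 : s = 1
    · subst h1; exact SimpleGraph.Reachable.refl 1
    · exact SimpleGraph.Adj.reachable ⟨fun h => h1 h.symm, by simpa using Or.inl hs⟩
  have : x ∈ H := hle (hgen ▸ Subgroup.mem_top x)
  exact this

lemma walkBall_finite (hS : S.Finite) :
    ∀ n : ℕ, {x : G | ∃ p : (cayleyGraph S).Walk 1 x, p.length ≤ n}.Finite := by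
  intro n
  induction n with
  | zero =>
    apply Set.Finite.subset (Set.finite_singleton 1)
    rintro x ⟨p, hp⟩
    exact (SimpleGraph.Walk.eq_of_length_eq_zero (Nat.le_zero.mp hp)).symm
  | succ n ih =>
    apply Set.Finite.subset (ih.union (Set.Finite.image2 (fun w s => w * s) ih
      ((hS.union hS.inv).inv)))
    rintro x ⟨p, hp⟩
    have hq : p.reverse.length ≤ n + 1 := by rwa [SimpleGraph.Walk.length_reverse]
    rcases hrev : p.reverse with _ | ⟨h, r⟩
    · exact Or.inl ⟨SimpleGraph.Walk.nil, Nat.zero_le n⟩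
    · rename_i w
      rw [hrev] at hq
      have hrl : r.length ≤ n := by
        simpa [SimpleGraph.Walk.length_cons] using hq
      have hw : w ∈ {x : G | ∃ p : (cayleyGraph S).Walk 1 x, p.length ≤ n} :=
        ⟨r.reverse, by rwa [SimpleGraph.Walk.length_reverse]⟩
      right
      refine ⟨w, hw, (x⁻¹ * w)⁻¹, ?_, ?_⟩
      · exact Set.inv_mem_inv.mpr h.2
      · group

lemma ball_finite (hS : S.Finite) (hgen : Subgroup.closure S = ⊤) (n : ℕ) :
    {x : G | (cayleyGraph S).dist 1 x ≤ n}.Finite := by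
  apply Set.Finite.subset (walkBall_finite hS n)
  intro x hx
  obtain ⟨p, hp⟩ := (reachable_one_cayley hgen x).exists_walk_length_eq_dist
  exact ⟨p, hp ▸ hx⟩

/-- crossing lemma -/
lemma walk_crossing {V : Type*} {X : SimpleGraph V} (P : V → Prop) :
    ∀ {u v : V} (p : X.Walk u v), P u → ¬ P v →
      ∃ i, i < p.length ∧ P (p.getVert i) ∧ ¬ P (p.getVert (i + 1)) := by
  intro u v p
  induction p with
  | nil => intro hu hv; exact absurd hu hv
  | cons h q ih =>
    rename_i a b c
    intro hu hv
    by_cases hb : P b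
    · obtain ⟨i, hi, h1, h2⟩ := ih hb hv
      exact ⟨i + 1, by simpa [SimpleGraph.Walk.length_cons] using Nat.succ_lt_succ hi,
        by rwa [SimpleGraph.Walk.getVert_cons_succ], by rwa [SimpleGraph.Walk.getVert_cons_succ]⟩
    · exact ⟨0, by simp [SimpleGraph.Walk.length_cons],
        by simpa [SimpleGraph.Walk.getVert_zero] using hu,
        by rwa [SimpleGraph.Walk.getVert_cons_succ, SimpleGraph.Walk.getVert_zero]⟩

end aux

/-- **Varopoulos isoperimetric inequality.** If `A` is a nonempty finite set of vertices of
the Cayley graph of a finitely generated group and `m` is the minimum positive integer with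
`b(m) ≥ 2|A|`, then `|A| ≤ 2m|∂A|`. -/
theorem stmt_12 {G : Type*} [Group G] (S : Set G) (hS : S.Finite)
    (hgen : Subgroup.closure S = ⊤)
    (A : Set G) (hA : A.Finite) (hne : A.Nonempty)
    (m : ℕ) (hm : 0 < m) (hball : 2 * A.ncard ≤ ballCard S m)
    (hmin : ∀ j : ℕ, 0 < j → j < m → ballCard S j < 2 * A.ncard) :
    A.ncard ≤ 2 * m * ((cayleyGraph S).boundarySet A).ncard := by
  classical
  rw [ballCard] at hball
  set X := cayleyGraph S with hX
  -- finiteness of the ball and of the boundary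
  have hBfin : {x : G | X.dist 1 x ≤ m}.Finite := ball_finite hS hgen m
  have hDfin : (X.boundarySet A).Finite := by
    apply Set.Finite.subset (Set.Finite.image2 (fun v s => v * s) hA ((hS.union hS.inv).inv))
    rintro u ⟨hu, v, hv, hadj⟩
    exact ⟨v, hv, (u⁻¹ * v)⁻¹, Set.inv_mem_inv.mpr hadj.2, by group⟩
  set Af := hA.toFinset with hAf
  set Bf := hBfin.toFinset with hBf
  set Df := hDfin.toFinset with hDf
  have hAcard : A.ncard = Af.card := Set.ncard_eq_toFinset_card _ hA
  have hBcard : {x : G | X.dist 1 x ≤ m}.ncard = Bf.card := Set.ncard_eq_toFinset_card _ hBfin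
  have hDcard : (X.boundarySet A).ncard = Df.card := Set.ncard_eq_toFinset_card _ hDfin
  rw [hAcard, hDcard]
  rw [hAcard, hBcard] at hball
  -- the double count
  set N := ∑ x ∈ Af, (Bf.filter (fun g => x * g ∉ A)).card with hN
  -- lower bound
  have hlow : Af.card * Bf.card ≤ 2 * N := by
    have key : ∀ x ∈ Af, Bf.card ≤ 2 * (Bf.filter (fun g => x * g ∉ A)).card := by
      intro x _
      have h1 : (Bf.filter (fun g => x * g ∈ A)).card ≤ Af.card := by
        apply Finset.card_le_card_of_injOn (fun g => x * g)
        · intro g hg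
          rw [Finset.mem_coe, Finset.mem_filter] at hg
          exact Finset.mem_coe.mpr (hAf ▸ hA.mem_toFinset.mpr hg.2)
        · intro a _ b _ hab
          exact mul_left_cancel hab
      have h2 : (Bf.filter (fun g => x * g ∈ A)).card
          + (Bf.filter (fun g => ¬ (x * g ∈ A))).card = Bf.card :=
        Finset.card_filter_add_card_filter_not _
      omega
    calc Af.card * Bf.card = ∑ _x ∈ Af, Bf.card := by
          rw [Finset.sum_const, smul_eq_mul]
      _ ≤ ∑ x ∈ Af, 2 * (Bf.filter (fun g => x * g ∉ A)).card := Finset.sum_le_sum key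
      _ = 2 * N := by rw [hN, Finset.mul_sum]
  -- swap the order of summation
  have hswap : N = ∑ g ∈ Bf, (Af.filter (fun x => x * g ∉ A)).card := by
    rw [hN]
    simp only [Finset.card_filter]
    exact Finset.sum_comm
  -- upper bound: for each g in the ball, few x ∈ A with x*g ∉ A
  have hup : ∀ g ∈ Bf, (Af.filter (fun x => x * g ∉ A)).card ≤ m * Df.card := by
    intro g hg
    have hdist : X.dist 1 g ≤ m := by
      have := hBfin.mem_toFinset.mp hg
      exact this
    obtain ⟨p, hp⟩ := (reachable_one_cayley hgen g).exists_walk_length_eq_dist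
    have hpl : p.length ≤ m := hp ▸ hdist
    set f : G → G × ℕ := fun x =>
      if h : ∃ i, i < p.length ∧ x * p.getVert i ∈ A ∧ x * p.getVert (i + 1) ∉ A
      then (x * p.getVert (Nat.find h + 1), Nat.find h) else (x, 0) with hf
    have hex : ∀ x ∈ Af.filter (fun x => x * g ∉ A),
        ∃ i, i < p.length ∧ x * p.getVert i ∈ A ∧ x * p.getVert (i + 1) ∉ A := by
      intro x hx
      simp only [Finset.mem_filter] at hx
      have hxA : x ∈ A := hA.mem_toFinset.mp hx.1
      apply walk_crossing (fun a => x * a ∈ A) p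
      · simpa using hxA
      · simpa using hx.2
    have hcard : (Af.filter (fun x => x * g ∉ A)).card ≤ (Df ×ˢ Finset.range m).card := by
      apply Finset.card_le_card_of_injOn f
      · intro x hx
        have h := hex x hx
        obtain ⟨hi, hmem, hnmem⟩ := Nat.find_spec h
        rw [hf]
        simp only [dif_pos h, Finset.mem_coe, Finset.mem_product, Finset.mem_range]
        constructor
        · apply hDfin.mem_toFinset.mpr
          refine ⟨hnmem, x * p.getVert (Nat.find h), hmem, ?_⟩
          have hadj := p.adj_getVert_succ hi
          exact ((leftMulHom S x).map_rel' hadj).symm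
        · exact lt_of_lt_of_le hi hpl
      · intro x hx y hy hxy
        have h1 := hex x hx
        have h2 := hex y hy
        rw [hf] at hxy
        simp only [dif_pos h1, dif_pos h2, Prod.mk.injEq] at hxy
        obtain ⟨hfst, hsnd⟩ := hxy
        rw [hsnd] at hfst
        exact mul_right_cancel hfst
    calc (Af.filter (fun x => x * g ∉ A)).card ≤ (Df ×ˢ Finset.range m).card := hcard
      _ = m * Df.card := by rw [Finset.card_product, Finset.card_range, mul_comm]
  have hupN : N ≤ Bf.card * (m * Df.card) := by
    rw [hswap]
    calc ∑ g ∈ Bf, (Af.filter (fun x => x * g ∉ A)).card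
        ≤ ∑ _g ∈ Bf, m * Df.card := Finset.sum_le_sum hup
      _ = Bf.card * (m * Df.card) := by rw [Finset.sum_const, smul_eq_mul]
  -- combine
  have hBpos : 0 < Bf.card := by
    rw [Finset.card_pos]
    exact ⟨1, hBfin.mem_toFinset.mpr (by simp [X.dist_self])⟩
  have hfinal : Af.card * Bf.card ≤ (2 * m * Df.card) * Bf.card := by
    calc Af.card * Bf.card ≤ 2 * N := hlow
      _ ≤ 2 * (Bf.card * (m * Df.card)) := by omega
      _ = (2 * m * Df.card) * Bf.card := by ring
  exact Nat.le_of_mul_le_mul_right hfinal hBpos
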